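/- arXiv:1003.3501 — 4 statements merged into one kernel-verified Lean document; each statement's English description precedes it below -/
import Mathlib

section
/- (Theorem 1, precise form.) Let M ≥ 2 and k₂ ≥ 1 be natural numbers and R > 0 a real rate. Let γ : {0, …, M−1} → ℝ satisfy γ_j ≥ 1 for all j and γ_{M−1} = 1. Define P_e(s) = 1 − e^{−(2^R − 1)/s} for s > 0 and P_o(s) = Σ_{j=0}^{M−1} C(M−1, j) · P_e(s)^j · (1 − P_e(s))^{M−1−j} · γ_j · P_e(s)^{(M−j)k₂ + 1}. Then lim_{s→∞} (−log P_o(s))/(log s) = M + k₂; i.e., the diversity order of the GDNC scheme is M + k₂. -/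
open Real Filter Topology

lemma gdnc_aux_log_pe (c : ℝ) (hc : 0 < c) :
    Tendsto (fun s : ℝ => Real.log (1 - Real.exp (-(c / s))) / Real.log s) atTop (𝓝 (-1)) := by
  have hderiv : HasDerivAt (fun x : ℝ => 1 - Real.exp (-x)) 1 0 := by
    have h1 : HasDerivAt (fun x : ℝ => Real.exp (-x)) (Real.exp (-(0:ℝ)) * (-1)) 0 :=
      (hasDerivAt_neg (0:ℝ)).exp
    have h2 := (hasDerivAt_const (0:ℝ) (1:ℝ)).sub h1
    exact h2.congr_deriv (by simp)
  have hslope := hasDerivAt_iff_tendsto_slope.mp hderiv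
  have hgo : Tendsto (fun s : ℝ => c / s) atTop (𝓝[≠] (0:ℝ)) := by
    apply tendsto_nhdsWithin_of_tendsto_nhds_of_eventually_within
    · exact tendsto_const_nhds.div_atTop tendsto_id
    · filter_upwards [eventually_gt_atTop (0:ℝ)] with s hs
      exact (div_pos hc hs).ne'
  have hq : Tendsto (fun s : ℝ => (1 - Real.exp (-(c/s))) / (c/s)) atTop (𝓝 1) := by
    have h := hslope.comp hgo
    refine h.congr' ?_
    filter_upwards [eventually_gt_atTop (0:ℝ)] with s hs
    simp only [slope, Function.comp, vsub_eq_sub, sub_zero, smul_eq_mul, Real.exp_zero, neg_zero]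
    field_simp
    ring
  have hPes : Tendsto (fun s : ℝ => (1 - Real.exp (-(c/s))) * s) atTop (𝓝 c) := by
    have h := hq.mul_const c
    rw [one_mul] at h
    refine h.congr' ?_
    filter_upwards [eventually_gt_atTop (0:ℝ)] with s hs
    field_simp
  have hlog : Tendsto (fun s : ℝ => Real.log ((1 - Real.exp (-(c/s))) * s)) atTop
      (𝓝 (Real.log c)) := (Real.continuousAt_log hc.ne').tendsto.comp hPes
  have hinv : Tendsto (fun s : ℝ => (Real.log s)⁻¹) atTop (𝓝 0) :=
    Real.tendsto_log_atTop.inv_tendsto_atTop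
  have hmain : Tendsto (fun s : ℝ =>
      Real.log ((1 - Real.exp (-(c/s))) * s) * (Real.log s)⁻¹ - 1) atTop (𝓝 (-1)) := by
    have := (hlog.mul hinv).sub_const 1
    simpa using this
  refine hmain.congr' ?_
  filter_upwards [eventually_gt_atTop (1:ℝ)] with s hs
  have hs0 : 0 < s := lt_trans one_pos hs
  have hPe : 0 < 1 - Real.exp (-(c/s)) := by
    have : Real.exp (-(c/s)) < 1 := Real.exp_lt_one_iff.mpr (by simp; positivity)
    linarith
  have hls : Real.log s ≠ 0 := (Real.log_pos hs).ne'
  rw [Real.log_mul hPe.ne' hs0.ne']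
  field_simp
  ring


/-- **Theorem 1 (GDNC diversity order).** Let `M ≥ 2` users each transmit `k₂ ≥ 1` parity
packets, with single-channel Rayleigh outage probability `P_e(s) = 1 − e^{−(2^R−1)/s}`.
If, conditional on `j` of the `M−1` inter-user channels failing, the base station fails
with probability `γ j · P_e^{(M−j)k₂+1}` (with multiplicities `γ j ≥ 1` and `γ (M−1) = 1`),
then the overall outage probability
`P_o(s) = Σ_{j<M} C(M−1,j) P_e^j (1−P_e)^{M−1−j} γ j P_e^{(M−j)k₂+1}`
has diversity order `M + k₂`. -/
theorem gdnc_diversity_order (M k₂ : ℕ) (hM : 2 ≤ M) (hk₂ : 1 ≤ k₂)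
    (R : ℝ) (hR : 0 < R) (γ : ℕ → ℝ)
    (hγ : ∀ j < M, 1 ≤ γ j) (hγtop : γ (M - 1) = 1) :
    Tendsto
      (fun s : ℝ =>
        -Real.log
            (∑ j ∈ Finset.range M,
              ((M - 1).choose j : ℝ) *
                (1 - Real.exp (-((2 : ℝ) ^ R - 1) / s)) ^ j *
                (1 - (1 - Real.exp (-((2 : ℝ) ^ R - 1) / s))) ^ (M - 1 - j) *
                γ j *
                (1 - Real.exp (-((2 : ℝ) ^ R - 1) / s)) ^ ((M - j) * k₂ + 1)) /
          Real.log s)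
      atTop (𝓝 (M + k₂ : ℝ)) := by
  set c : ℝ := (2 : ℝ) ^ R - 1 with hcdef
  have hc : 0 < c := by
    have : (1:ℝ) < (2:ℝ) ^ R := Real.one_lt_rpow_iff_of_pos (by norm_num) |>.mpr (Or.inl ⟨by norm_num, hR⟩)
    simp only [hcdef]; linarith
  simp only [neg_div]
  set N : ℕ := M + k₂ with hNdef
  set C : ℝ := ∑ j ∈ Finset.range M, ((M - 1).choose j : ℝ) * γ j with hCdef
  have hC1 : 1 ≤ C := by
    have hmem : M - 1 ∈ Finset.range M := Finset.mem_range.mpr (by omega)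
    have h := Finset.single_le_sum (f := fun j => ((M - 1).choose j : ℝ) * γ j)
      (fun j hj => by
        have h1 : (1:ℝ) ≤ γ j := hγ j (Finset.mem_range.mp hj)
        have h2 : (0:ℝ) ≤ ((M - 1).choose j : ℝ) := Nat.cast_nonneg _
        exact mul_nonneg h2 (by linarith)) hmem
    simpa [Nat.choose_self, hγtop] using h
  have hC0 : 0 < C := lt_of_lt_of_le one_pos hC1
  -- eventual bounds on the sum
  have hbound : ∀ᶠ s : ℝ in atTop,
      (1 - Real.exp (-(c / s))) ^ N ≤
        (∑ j ∈ Finset.range M,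
          ((M - 1).choose j : ℝ) * (1 - Real.exp (-(c / s))) ^ j *
            (1 - (1 - Real.exp (-(c / s)))) ^ (M - 1 - j) * γ j *
            (1 - Real.exp (-(c / s))) ^ ((M - j) * k₂ + 1)) ∧
        (∑ j ∈ Finset.range M,
          ((M - 1).choose j : ℝ) * (1 - Real.exp (-(c / s))) ^ j *
            (1 - (1 - Real.exp (-(c / s)))) ^ (M - 1 - j) * γ j *
            (1 - Real.exp (-(c / s))) ^ ((M - j) * k₂ + 1)) ≤ C * (1 - Real.exp (-(c / s))) ^ N := by
    filter_upwards [eventually_gt_atTop (0:ℝ)] with s hs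
    set p : ℝ := 1 - Real.exp (-(c / s)) with hpdef
    have hp0 : 0 < p := by
      have : Real.exp (-(c / s)) < 1 := Real.exp_lt_one_iff.mpr (by
        simp only [neg_neg, Left.neg_neg_iff]; positivity)
      simp only [hpdef]; linarith
    have hp1 : p < 1 := by
      have := Real.exp_pos (-(c / s)); simp only [hpdef]; linarith
    constructor
    · have hmem : M - 1 ∈ Finset.range M := Finset.mem_range.mpr (by omega)
      have h := Finset.single_le_sum
        (f := fun j => ((M - 1).choose j : ℝ) * p ^ j * (1 - p) ^ (M - 1 - j) * γ j *
          p ^ ((M - j) * k₂ + 1))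
        (fun j hj => by
          have h1 : (1:ℝ) ≤ γ j := hγ j (Finset.mem_range.mp hj)
          have h2 : (0:ℝ) ≤ ((M - 1).choose j : ℝ) := Nat.cast_nonneg _
          have h3 : (0:ℝ) ≤ p ^ j := by positivity
          have h4 : (0:ℝ) ≤ (1 - p) ^ (M - 1 - j) := pow_nonneg (by linarith) _
          have h5 : (0:ℝ) ≤ p ^ ((M - j) * k₂ + 1) := by positivity
          exact mul_nonneg (mul_nonneg (mul_nonneg (mul_nonneg h2 h3) h4) (by linarith)) h5) hmem
      have e1 : M - 1 - (M - 1) = 0 := by omega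
      have e2 : M - (M - 1) = 1 := by omega
      have e3 : (M - 1) + (1 * k₂ + 1) = N := by omega
      calc p ^ N = p ^ (M - 1) * p ^ (1 * k₂ + 1) := by rw [← pow_add, e3]
        _ = ((M - 1).choose (M - 1) : ℝ) * p ^ (M - 1) * (1 - p) ^ (M - 1 - (M - 1)) *
            γ (M - 1) * p ^ ((M - (M - 1)) * k₂ + 1) := by
              rw [Nat.choose_self, e1, e2, hγtop]; push_cast; ring
        _ ≤ _ := h
    · calc (∑ j ∈ Finset.range M,
            ((M - 1).choose j : ℝ) * p ^ j * (1 - p) ^ (M - 1 - j) * γ j *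
              p ^ ((M - j) * k₂ + 1))
          ≤ ∑ j ∈ Finset.range M, ((M - 1).choose j : ℝ) * γ j * p ^ N := by
            apply Finset.sum_le_sum
            intro j hj
            have hjM : j < M := Finset.mem_range.mp hj
            have h1 : (1:ℝ) ≤ γ j := hγ j hjM
            have hle : N ≤ j + ((M - j) * k₂ + 1) := by
              obtain ⟨d, hd⟩ : ∃ d, M - j = d + 1 := ⟨M - j - 1, by omega⟩
              obtain ⟨k, hk⟩ : ∃ k, k₂ = k + 1 := ⟨k₂ - 1, by omega⟩
              have hMeq : M = j + d + 1 := by omega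
              rw [hNdef, hd, hk, hMeq]
              nlinarith [Nat.zero_le (d * k)]
            have hpow : p ^ (j + ((M - j) * k₂ + 1)) ≤ p ^ N :=
              pow_le_pow_of_le_one hp0.le hp1.le hle
            have hpow2 : (1 - p) ^ (M - 1 - j) ≤ 1 :=
              pow_le_one₀ (by linarith) (by linarith)
            have hch : (0:ℝ) ≤ ((M - 1).choose j : ℝ) := Nat.cast_nonneg _
            calc ((M - 1).choose j : ℝ) * p ^ j * (1 - p) ^ (M - 1 - j) * γ j *
                p ^ ((M - j) * k₂ + 1)
                ≤ ((M - 1).choose j : ℝ) * p ^ j * 1 * γ j * p ^ ((M - j) * k₂ + 1) := by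
                  apply mul_le_mul_of_nonneg_right
                  apply mul_le_mul_of_nonneg_right
                  apply mul_le_mul_of_nonneg_left hpow2
                  · positivity
                  · linarith
                  · positivity
              _ = ((M - 1).choose j : ℝ) * γ j * p ^ (j + ((M - j) * k₂ + 1)) := by
                  rw [pow_add]; ring
              _ ≤ ((M - 1).choose j : ℝ) * γ j * p ^ N := by
                  apply mul_le_mul_of_nonneg_left hpow
                  nlinarith
        _ = C * p ^ N := by rw [hCdef, ← Finset.sum_mul]
  -- the key single-channel limit
  have hA : Tendsto (fun s : ℝ => Real.log (1 - Real.exp (-(c / s))) / Real.log s)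
      atTop (𝓝 (-1)) := gdnc_aux_log_pe c hc
  have hinv : Tendsto (fun s : ℝ => (Real.log s)⁻¹) atTop (𝓝 0) :=
    Real.tendsto_log_atTop.inv_tendsto_atTop
  -- squeeze
  have hupper : Tendsto (fun s : ℝ => -((N:ℝ) * Real.log (1 - Real.exp (-(c / s)))) / Real.log s)
      atTop (𝓝 (N:ℝ)) := by
    have h := hA.const_mul (-(N:ℝ))
    simp only [mul_neg_one] at h
    refine (by simpa using h : Tendsto _ atTop (𝓝 (N:ℝ))).congr (fun s => by ring)
  have hlower : Tendsto (fun s : ℝ =>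
      -(Real.log C + (N:ℝ) * Real.log (1 - Real.exp (-(c / s)))) / Real.log s)
      atTop (𝓝 (N:ℝ)) := by
    have h1 := (hinv.const_mul (-Real.log C))
    have h2 := hA.const_mul (-(N:ℝ))
    have h := h1.add h2
    simp only [mul_zero, mul_neg_one, zero_add] at h
    refine (by simpa using h : Tendsto _ atTop (𝓝 (N:ℝ))).congr (fun s => by ring)
  have hNcast : ((N:ℕ) : ℝ) = (M + k₂ : ℝ) := by push_cast [hNdef]; ring
  rw [← hNcast]
  apply tendsto_of_tendsto_of_tendsto_of_le_of_le' hlower hupper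
  · filter_upwards [hbound, eventually_gt_atTop (1:ℝ)] with s hb hs1
    obtain ⟨hlo, hhi⟩ := hb
    have hs0 : 0 < s := lt_trans one_pos hs1
    have hp0 : 0 < 1 - Real.exp (-(c / s)) := by
      have : Real.exp (-(c / s)) < 1 := Real.exp_lt_one_iff.mpr (by
        simp only [neg_neg, Left.neg_neg_iff]; positivity)
      linarith
    have hPo0 : 0 < (∑ j ∈ Finset.range M,
        ((M - 1).choose j : ℝ) * (1 - Real.exp (-(c / s))) ^ j *
          (1 - (1 - Real.exp (-(c / s)))) ^ (M - 1 - j) * γ j *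
          (1 - Real.exp (-(c / s))) ^ ((M - j) * k₂ + 1)) :=
      lt_of_lt_of_le (by positivity) hlo
    have hlog : Real.log (∑ j ∈ Finset.range M,
        ((M - 1).choose j : ℝ) * (1 - Real.exp (-(c / s))) ^ j *
          (1 - (1 - Real.exp (-(c / s)))) ^ (M - 1 - j) * γ j *
          (1 - Real.exp (-(c / s))) ^ ((M - j) * k₂ + 1)) ≤
        Real.log C + (N:ℝ) * Real.log (1 - Real.exp (-(c / s))) := by
      have h := Real.log_le_log hPo0 hhi
      rwa [Real.log_mul hC0.ne' (by positivity), Real.log_pow] at h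
    have hls : 0 < Real.log s := Real.log_pos hs1
    rw [neg_div]
    exact neg_le_neg (div_le_div_of_nonneg_right hlog hls.le)
  · filter_upwards [hbound, eventually_gt_atTop (1:ℝ)] with s hb hs1
    obtain ⟨hlo, hhi⟩ := hb
    have hs0 : 0 < s := lt_trans one_pos hs1
    have hp0 : 0 < 1 - Real.exp (-(c / s)) := by
      have : Real.exp (-(c / s)) < 1 := Real.exp_lt_one_iff.mpr (by
        simp only [neg_neg, Left.neg_neg_iff]; positivity)
      linarith
    have hlog : (N:ℝ) * Real.log (1 - Real.exp (-(c / s))) ≤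
        Real.log (∑ j ∈ Finset.range M,
        ((M - 1).choose j : ℝ) * (1 - Real.exp (-(c / s))) ^ j *
          (1 - (1 - Real.exp (-(c / s)))) ^ (M - 1 - j) * γ j *
          (1 - Real.exp (-(c / s))) ^ ((M - j) * k₂ + 1)) := by
      have h := Real.log_le_log (by positivity : (0:ℝ) < (1 - Real.exp (-(c / s))) ^ N) hlo
      rwa [Real.log_pow] at h
    have hls : 0 < Real.log s := Real.log_pos hs1
    rw [neg_div]
    exact neg_le_neg (div_le_div_of_nonneg_right hlog hls.le)
end

section
/- Let M ≥ 2 and k₂ ≥ 2 be natural numbers, and let γ : {0, …, M−1} → ℝ satisfy γ_j ≥ 1 for all j and γ_{M−1} = 1. Define Q(p) = Σ_{j=0}^{M−1} C(M−1, j) · p^j · (1−p)^{M−1−j} · γ_j · p^{(M−j)k₂ + 1} for p ∈ (0,1). Then lim_{p→0⁺} Q(p)/p^{M+k₂} = 1. -/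
open Filter Topology

/-- In the GDNC scheme with `M ≥ 2` users and `k₂ ≥ 2` parity transmissions per user,
the overall outage probability
`Q(p) = Σ_{j<M} C(M−1,j) p^j (1−p)^{M−1−j} γ j p^{(M−j)k₂+1}`
(with multiplicities `γ j ≥ 1` and `γ (M−1) = 1`) satisfies
`lim_{p→0⁺} Q(p)/p^{M+k₂} = 1`. -/
theorem gdnc_outage_asymptotics (M k₂ : ℕ) (hM : 2 ≤ M) (hk₂ : 2 ≤ k₂)
    (γ : ℕ → ℝ) (hγ : ∀ j < M, 1 ≤ γ j) (hγtop : γ (M - 1) = 1) :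
    Tendsto
      (fun p : ℝ =>
        (∑ j ∈ Finset.range M,
            ((M - 1).choose j : ℝ) * p ^ j * (1 - p) ^ (M - 1 - j) * γ j *
              p ^ ((M - j) * k₂ + 1)) /
          p ^ (M + k₂))
      (nhdsWithin 0 (Set.Ioo (0 : ℝ) 1)) (𝓝 1) := by
  have hd : ∀ j < M, j + ((M - j) * k₂ + 1) = (M + k₂) + (M - 1 - j) * (k₂ - 1) := by
    intro j hj
    obtain ⟨a, rfl⟩ : ∃ a, M = j + a + 1 := ⟨M - j - 1, by omega⟩
    obtain ⟨b, rfl⟩ : ∃ b, k₂ = b + 1 := ⟨k₂ - 1, by omega⟩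
    have h1 : j + a + 1 - j = a + 1 := by omega
    have h2 : j + a + 1 - 1 - j = a := by omega
    have h3 : b + 1 - 1 = b := by omega
    rw [h1, h2, h3]; ring
  set g : ℝ → ℝ := fun p => ∑ j ∈ Finset.range M,
      ((M - 1).choose j : ℝ) * p ^ ((M - 1 - j) * (k₂ - 1)) * (1 - p) ^ (M - 1 - j) * γ j
    with hgdef
  have hg0 : g 0 = 1 := by
    simp only [hgdef]
    rw [Finset.sum_eq_single (M - 1)]
    · have h1 : M - 1 - (M - 1) = 0 := by omega
      simp [h1, hγtop]
    · intro j hj hne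
      have hjM : j < M := Finset.mem_range.1 hj
      have hne' : (M - 1 - j) * (k₂ - 1) ≠ 0 := by
        have : 0 < M - 1 - j := by omega
        have : 0 < k₂ - 1 := by omega
        positivity
      simp [zero_pow hne']
    · intro h; exact absurd (Finset.mem_range.2 (by omega)) h
  have hcont : Continuous g := by
    rw [hgdef]; fun_prop
  have htend : Tendsto g (nhdsWithin 0 (Set.Ioo (0 : ℝ) 1)) (𝓝 1) := by
    rw [← hg0]
    exact (hcont.tendsto 0).mono_left nhdsWithin_le_nhds
  refine Tendsto.congr' ?_ htend
  filter_upwards [self_mem_nhdsWithin] with p hp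
  obtain ⟨hp0, hp1⟩ := hp
  have hpne : p ≠ 0 := ne_of_gt hp0
  simp only [hgdef]
  rw [eq_div_iff (pow_ne_zero _ hpne), Finset.sum_mul]
  refine Finset.sum_congr rfl fun j hj => ?_
  have hjM : j < M := Finset.mem_range.1 hj
  have key : p ^ j * p ^ ((M - j) * k₂ + 1)
      = p ^ ((M - 1 - j) * (k₂ - 1)) * p ^ (M + k₂) := by
    rw [← pow_add, ← pow_add, hd j hjM]; ring_nf
  linear_combination (-((M - 1).choose j : ℝ) * (1 - p) ^ (M - 1 - j) * γ j) * key
end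

section
/- Let F = GF(4) (the field with four elements) and let a ∈ F with a ≠ 0 and a ≠ 1. Then for all x, y ∈ F not both zero, the vector (x, y, x + y, x + a·y) ∈ F⁴ has Hamming weight at least 3. Consequently, the two-user DNC code with generator matrix [[1,0,1,1],[0,1,1,a]] has minimum distance 3, so the base station can recover both information packets (I₁, I₂) from any 2 of the 4 received packets. -/
open scoped Classical

lemma hamming_ge_three {α : Type*} [DecidableEq α] [Zero α] (f : Fin 4 → α)
    (i j k : Fin 4) (hij : i ≠ j) (hik : i ≠ k) (hjk : j ≠ k)
    (hi : f i ≠ 0) (hj : f j ≠ 0) (hk : f k ≠ 0) : 3 ≤ hammingNorm f := by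
  have hsub : ({i, j, k} : Finset (Fin 4)) ⊆ Finset.univ.filter (fun t => f t ≠ 0) := by
    intro t ht
    simp only [Finset.mem_insert, Finset.mem_singleton] at ht
    rcases ht with rfl | rfl | rfl <;> simp [hi, hj, hk]
  have hcard : ({i, j, k} : Finset (Fin 4)).card = 3 := by
    rw [Finset.card_insert_of_notMem (by simp [hij, hik]),
        Finset.card_insert_of_notMem (by simp [hjk]), Finset.card_singleton]
  calc 3 = ({i, j, k} : Finset (Fin 4)).card := hcard.symm
    _ ≤ _ := Finset.card_le_card hsub
    _ = hammingNorm f := by rw [hammingNorm]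

/-- In the two-user DNC scheme over GF(4) with generator matrix
`[[1,0,1,1],[0,1,1,a]]` (`a ≠ 0`, `a ≠ 1`), every nonzero codeword
`(x, y, x+y, x+a·y)` has Hamming weight at least 3, so the base station can
recover both information packets from any 2 of the 4 received packets. -/
theorem dnc_two_user_min_distance_three
    (a : GaloisField 2 2) (ha0 : a ≠ 0) (ha1 : a ≠ 1) :
    ∀ x y : GaloisField 2 2, ¬(x = 0 ∧ y = 0) →
      3 ≤ hammingNorm ![x, y, x + y, x + a * y] := by
  intro x y hxy
  by_cases hx : x = 0
  · have hy : y ≠ 0 := fun h => hxy ⟨hx, h⟩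
    subst hx
    refine hamming_ge_three _ 1 2 3 (by decide) (by decide) (by decide) ?_ ?_ ?_
    · simpa using hy
    · simpa using hy
    · simpa using mul_ne_zero ha0 hy
  · by_cases hy : y = 0
    · subst hy
      refine hamming_ge_three _ 0 2 3 (by decide) (by decide) (by decide) ?_ ?_ ?_
      · simpa using hx
      · simpa using hx
      · simpa using hx
    · -- x ≠ 0, y ≠ 0: x+y and x+a*y can't both be zero
      by_cases h2 : x + y = 0
      · have h3 : x + a * y ≠ 0 := by
          intro h3
          have : (a - 1) * y = 0 := by
            have := sub_eq_zero.mpr (h3.trans h2.symm)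
            ring_nf at this ⊢
            linear_combination this
          rcases mul_eq_zero.mp this with h | h
          · exact ha1 (sub_eq_zero.mp h)
          · exact hy h
        refine hamming_ge_three _ 0 1 3 (by decide) (by decide) (by decide) ?_ ?_ ?_
        · simpa using hx
        · simpa using hy
        · simpa using h3
      · refine hamming_ge_three _ 0 1 2 (by decide) (by decide) (by decide) ?_ ?_ ?_
        · simpa using hx
        · simpa using hy
        · simpa using h2
end

section
/- Every linear subspace C of GF(4)^8 (functions Fin 8 → GF(4)) of dimension 4 contains a nonzero codeword of Hamming weight at most 4; i.e., no [8,4,5] code over the field with four elements exists, so the Singleton bound d = 5 for a rate-4/8 code can only be achieved with field size at least 8. -/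
open scoped Classical

namespace NoMDSAux

abbrev F := GaloisField 2 2

noncomputable instance : Fintype F := Fintype.ofFinite F

lemma card_F : Fintype.card F = 4 := by
  rw [← Nat.card_eq_fintype_card]
  have := GaloisField.card 2 2 (by norm_num)
  simpa using this

/-- If `c` vanishes on a set `s`, its Hamming norm is at most `8 - s.card`. -/
lemma hnorm_le (c : Fin 8 → F) (s : Finset (Fin 8)) (h : ∀ j ∈ s, c j = 0) :
    hammingNorm c ≤ 8 - s.card := by
  have hsub : ({i | c i ≠ 0} : Finset (Fin 8)) ⊆ sᶜ := by
    intro i hi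
    simp only [Finset.mem_filter, Finset.mem_univ, true_and] at hi
    simp only [Finset.mem_compl]
    exact fun hmem => hi (h i hmem)
  have := Finset.card_le_card hsub
  rw [Finset.card_compl, Fintype.card_fin] at this
  exact this

end NoMDSAux

/-- No `[8,4,5]` code over GF(4) exists: every 4-dimensional linear subspace of
`GF(4)^8` contains a nonzero codeword of Hamming weight at most 4, so the Singleton
bound `d = 5` for a rate-4/8 code can only be achieved with field size at least 8. -/
theorem no_8_4_5_code_over_gf4
    (C : Submodule (GaloisField 2 2) (Fin 8 → GaloisField 2 2))
    (hdim : Module.finrank (GaloisField 2 2) C = 4) :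
    ∃ c ∈ C, c ≠ 0 ∧ hammingNorm c ≤ 4 := by
  open NoMDSAux in
  by_contra hcon
  push_neg at hcon
  -- every nonzero codeword has weight ≥ 5
  have hwt : ∀ c ∈ C, c ≠ 0 → 5 ≤ hammingNorm c := fun c hc h0 => hcon c hc h0
  -- the projection onto the first four coordinates
  have h48 : (4 : ℕ) ≤ 8 := by norm_num
  set π : C →ₗ[F] (Fin 4 → F) :=
    (LinearMap.funLeft F F (Fin.castLE h48)).comp C.subtype with hπ
  have hπ_apply : ∀ (x : C) (i : Fin 4), π x i = (x : Fin 8 → F) (Fin.castLE h48 i) := by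
    intro x i; rfl
  -- π is injective
  have hinj : Function.Injective π := by
    rw [← LinearMap.ker_eq_bot, LinearMap.ker_eq_bot']
    intro x hx
    by_contra hx0
    have hxC : (x : Fin 8 → F) ∈ C := x.2
    have hxne : (x : Fin 8 → F) ≠ 0 := by
      intro h; exact hx0 (Subtype.ext h)
    have h5 := hwt _ hxC hxne
    have hx' : ∀ i : Fin 4, (x : Fin 8 → F) (Fin.castLE h48 i) = 0 := by
      intro i
      have := congrFun hx i
      rw [hπ_apply] at this
      simpa using this
    have hzero : ∀ j ∈ ({0, 1, 2, 3} : Finset (Fin 8)), (x : Fin 8 → F) j = 0 := by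
      intro j hj
      fin_cases hj
      · simpa using hx' 0
      · simpa using hx' 1
      · simpa using hx' 2
      · simpa using hx' 3
    have hle := hnorm_le _ _ hzero
    have hcard : ({0, 1, 2, 3} : Finset (Fin 8)).card = 4 := by decide
    omega
  -- hence surjective (equal finrank)
  have hfr : Module.finrank F C = Module.finrank F (Fin 4 → F) := by
    rw [hdim, Module.finrank_fin_fun]
  have hsurj : Function.Surjective π :=
    (LinearMap.injective_iff_surjective_of_finrank_eq_finrank hfr).mp hinj
  -- for each a, pick a codeword with first four coordinates (1,0,0,a)
  have hex : ∀ a : F, ∃ x : C, π x = ![1, 0, 0, a] := fun a => hsurj _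
  choose cw hcw using hex
  have hcoord : ∀ (a : F) (i : Fin 4),
      ((cw a : Fin 8 → F)) (Fin.castLE h48 i) = ![1, 0, 0, a] i := by
    intro a i
    rw [← hπ_apply, hcw a]
  have h0' : ∀ a : F, (cw a : Fin 8 → F) 0 = 1 := fun a => by
    have := hcoord a 0; simpa using this
  have h1' : ∀ a : F, (cw a : Fin 8 → F) 1 = 0 := fun a => by
    have := hcoord a 1; simpa using this
  have h2' : ∀ a : F, (cw a : Fin 8 → F) 2 = 0 := fun a => by
    have := hcoord a 2; simpa using this
  have h3' : ∀ a : F, (cw a : Fin 8 → F) 3 = a := fun a => by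
    have := hcoord a 3; simpa using this
  -- distinct a,b give codewords differing at every coordinate j with 3 ≤ j
  have hdiff : ∀ (a b : F) (j : Fin 8), a ≠ b → 3 ≤ (j : ℕ) →
      (cw a : Fin 8 → F) j ≠ (cw b : Fin 8 → F) j := by
    intro a b j hab hj heq
    set d : Fin 8 → F := (cw a : Fin 8 → F) - (cw b : Fin 8 → F) with hd
    have hdC : d ∈ C := sub_mem (cw a).2 (cw b).2
    have hd3 : d 3 = a - b := by simp [hd, h3']
    have hdne : d ≠ 0 := by
      intro h
      have : d 3 = 0 := by rw [h]; rfl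
      rw [hd3] at this
      exact hab (sub_eq_zero.mp this)
    have hdj : d j = 0 := by simp [hd, heq]
    have hzero : ∀ i ∈ insert j ({0, 1, 2} : Finset (Fin 8)), d i = 0 := by
      intro i hi
      rcases Finset.mem_insert.mp hi with h | h
      · rwa [h]
      · fin_cases h
        · simp [hd, h0']
        · simp [hd, h1']
        · simp [hd, h2']
    have hle := hnorm_le d _ hzero
    have hjnot : j ∉ ({0, 1, 2} : Finset (Fin 8)) := by
      simp only [Finset.mem_insert, Finset.mem_singleton]
      intro h
      rcases h with h | h | h <;> (subst h; simp at hj)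
    rw [Finset.card_insert_of_notMem hjnot] at hle
    have h5 := hwt d hdC hdne
    have hcard : ({0, 1, 2} : Finset (Fin 8)).card = 3 := by decide
    omega
  -- the positions 3..7
  set P : Finset (Fin 8) := {j | 3 ≤ (j : ℕ)} with hP
  have hPmem : ∀ j : Fin 8, j ∈ P ↔ 3 ≤ (j : ℕ) := by
    intro j; simp [hP]
  have hPcard : P.card = 5 := by decide
  -- the zero set of cw a among positions 3..7 has at most one element
  have hZ : ∀ a : F, ({j ∈ P | (cw a : Fin 8 → F) j = 0} : Finset (Fin 8)).card ≤ 1 := by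
    intro a
    by_contra hle
    push_neg at hle
    have hane : (cw a : Fin 8 → F) ≠ 0 := by
      intro h
      have := h0' a
      rw [h] at this
      simpa using this.symm
    have h5 := hwt _ (cw a).2 hane
    have hsub : ({i | (cw a : Fin 8 → F) i ≠ 0} : Finset (Fin 8)) ⊆
        insert 0 ({j ∈ P | (cw a : Fin 8 → F) j ≠ 0}) := by
      intro i hi
      simp only [Finset.mem_filter, Finset.mem_univ, true_and] at hi
      rcases eq_or_ne i 0 with h0 | h0
      · exact Finset.mem_insert.mpr (Or.inl h0)
      · refine Finset.mem_insert.mpr (Or.inr ?_)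
        rw [Finset.mem_filter]
        refine ⟨(hPmem i).mpr ?_, hi⟩
        have hv0 : (i : ℕ) ≠ 0 := fun h => h0 (Fin.ext h)
        have hv1 : (i : ℕ) ≠ 1 := by
          intro h
          have : i = (1 : Fin 8) := Fin.ext (by simp [h])
          rw [this] at hi; exact hi (h1' a)
        have hv2 : (i : ℕ) ≠ 2 := by
          intro h
          have : i = (2 : Fin 8) := Fin.ext (by simp [h])
          rw [this] at hi; exact hi (h2' a)
        omega
    have hcard1 := Finset.card_le_card hsub
    have hcard2 := Finset.card_insert_le (0 : Fin 8) ({j ∈ P | (cw a : Fin 8 → F) j ≠ 0})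
    have hsplit : ({j ∈ P | (cw a : Fin 8 → F) j = 0} : Finset (Fin 8)).card
        + ({j ∈ P | (cw a : Fin 8 → F) j ≠ 0} : Finset (Fin 8)).card = P.card := by
      rw [Finset.card_filter_add_card_filter_not]
    have hnorm : hammingNorm ((cw a : Fin 8 → F))
        = ({i | (cw a : Fin 8 → F) i ≠ 0} : Finset (Fin 8)).card := rfl
    omega
  -- for each position j in P there is some a with cw a vanishing at j
  have hexzero : ∀ j : Fin 8, ∃ a : F, j ∈ P → (cw a : Fin 8 → F) j = 0 := by
    intro j
    by_cases hj : j ∈ P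
    · have hjval : 3 ≤ (j : ℕ) := (hPmem j).mp hj
      have hinj' : Function.Injective (fun a : F => (cw a : Fin 8 → F) j) := by
        intro a b hab
        by_contra hne
        exact hdiff a b j hne hjval hab
      have hsurj' : Function.Surjective (fun a : F => (cw a : Fin 8 → F) j) :=
        Finite.surjective_of_injective hinj'
      obtain ⟨a, ha⟩ := hsurj' 0
      exact ⟨a, fun _ => ha⟩
    · exact ⟨0, fun h => absurd h hj⟩
  choose f hf using hexzero
  -- pigeonhole: 5 positions, 4 field elements
  have hlt : (Finset.univ : Finset F).card < P.card := by
    rw [hPcard, Finset.card_univ, card_F]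
    norm_num
  obtain ⟨j, hj, j', hj', hne, heq⟩ :=
    Finset.exists_ne_map_eq_of_card_lt_of_maps_to hlt
      (fun j _ => Finset.mem_univ (f j))
  -- both j and j' lie in the zero set of cw (f j), contradicting hZ
  have hjm : j ∈ ({i ∈ P | (cw (f j) : Fin 8 → F) i = 0} : Finset (Fin 8)) :=
    Finset.mem_filter.mpr ⟨hj, hf j hj⟩
  have hj'm : j' ∈ ({i ∈ P | (cw (f j) : Fin 8 → F) i = 0} : Finset (Fin 8)) := by
    refine Finset.mem_filter.mpr ⟨hj', ?_⟩
    rw [heq]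
    exact hf j' hj'
  exact hne (Finset.card_le_one.mp (hZ (f j)) j hjm j' hj'm)
end
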